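/- Let F be a finite field, Θ ∈ Aut(F) with order dividing n, λ ∈ {1, -1}, and let A be a skew (Θ, λ)-constacyclic code of length n over F generated by monic f(x) with x^n - λ = h(x)f(x) in F[x;Θ]. Then A^⊥ ⊆ A if and only if h*(x)h(x) is right divisible by x^n - λ, where h*(x) = Σ_{j=0}^{k} Θ^j(h_{k-j}) x^j is the skew reciprocal polynomial of h(x) = Σ_{j=0}^{k} h_j x^j. -/

import Mathlib

/-- Multiplication in the skew polynomial ring `S[x;σ]`, where polynomials are
represented as finitely supported coefficient functions `ℕ →₀ S` and
`(a x^i) (b x^j) = a σ^i(b) x^{i+j}`. -/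
noncomputable def skewMul {S : Type} [Ring S] (σ : RingAut S) (f g : ℕ →₀ S) : ℕ →₀ S :=
  f.sum fun i a => g.sum fun j b => Finsupp.single (i + j) (a * (σ ^ i) b)

/-- A code `C` of length `n` over `S` is skew `(σ, δ)`-constacyclic if it is closed
under the shift `(c₀, …, c_{n-1}) ↦ (σ(δ c_{n-1}), σ(c₀), …, σ(c_{n-2}))`. -/
def IsSkewConstacyclic {S : Type} [CommRing S] {n : ℕ} [NeZero n]
    (σ : RingAut S) (δ : S) (C : Set (Fin n → S)) : Prop :=
  ∀ c ∈ C, (fun i : Fin n => σ ((if i = 0 then δ else 1) * c (i - 1))) ∈ C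

/-- The Euclidean dual of a code, with respect to the standard bilinear form. -/
def dualSet {ι S : Type} [Fintype ι] [CommRing S] (C : Set (ι → S)) : Set (ι → S) :=
  {a | ∀ b ∈ C, ∑ t, a t * b t = 0}

/-- The polynomial (coefficient vector) associated to a codeword. -/
noncomputable def toPoly {S : Type} [Semiring S] {n : ℕ} (c : Fin n → S) : ℕ →₀ S :=
  ∑ i : Fin n, Finsupp.single (i : ℕ) (c i)

/-- A polynomial is monic: it has a coefficient equal to `1` beyond which all
coefficients vanish. -/
def IsMonicPoly {S : Type} [Semiring S] (g : ℕ →₀ S) : Prop :=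
  ∃ d, g d = 1 ∧ ∀ j, d < j → g j = 0

/-- The skew reciprocal polynomial `h*(x) = Σ_{j=0}^k Θ^j(h_{k-j}) x^j` of a
polynomial `h` of degree (at most) `k`. -/
noncomputable def skewRecip {S : Type} [Ring S] (Θ : RingAut S) (k : ℕ) (h : ℕ →₀ S) :
    ℕ →₀ S :=
  ∑ j ∈ Finset.range (k + 1), Finsupp.single j ((Θ ^ j) (h (k - j)))


namespace SkewAux

variable {S : Type} [Ring S] (σ : RingAut S)

theorem skewMul_apply (p q : ℕ →₀ S) (t : ℕ) :
    skewMul σ p q t =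
      ∑ i ∈ p.support, (if i ≤ t then p i * (σ ^ i) (q (t - i)) else 0) := by
  rw [skewMul, Finsupp.sum, Finsupp.finset_sum_apply]
  refine Finset.sum_congr rfl fun i _ => ?_
  rw [Finsupp.sum, Finsupp.finset_sum_apply]
  by_cases hit : i ≤ t
  · rw [if_pos hit]
    have : ∀ j ∈ q.support, (Finsupp.single (i + j) (p i * (σ ^ i) (q j))) t
        = if j = t - i then p i * (σ ^ i) (q j) else 0 := by
      intro j _
      rw [Finsupp.single_apply]
      congr 1
      simp only [eq_iff_iff]
      omega
    rw [Finset.sum_congr rfl this, Finset.sum_ite_eq' q.support (t - i)]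
    by_cases hmem : t - i ∈ q.support
    · rw [if_pos hmem]
    · rw [if_neg hmem, Finsupp.notMem_support_iff.mp hmem, map_zero, mul_zero]
  · rw [if_neg hit]
    refine Finset.sum_eq_zero fun j _ => ?_
    rw [Finsupp.single_apply, if_neg (by omega)]

theorem zero_skewMul (q : ℕ →₀ S) : skewMul σ 0 q = 0 := by
  simp [skewMul]

theorem skewMul_zero (p : ℕ →₀ S) : skewMul σ p 0 = 0 := by
  simp [skewMul]

theorem single_skewMul_apply (i : ℕ) (a : S) (q : ℕ →₀ S) (t : ℕ) :
    skewMul σ (Finsupp.single i a) q t =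
      if i ≤ t then a * (σ ^ i) (q (t - i)) else 0 := by
  by_cases ha : a = 0
  · subst ha; simp [zero_skewMul]
  · rw [skewMul_apply, Finsupp.support_single_ne_zero _ ha, Finset.sum_singleton,
      Finsupp.single_eq_same]

theorem add_skewMul (p p' q : ℕ →₀ S) :
    skewMul σ (p + p') q = skewMul σ p q + skewMul σ p' q := by
  rw [skewMul, skewMul, skewMul]
  apply Finsupp.sum_add_index
  · intro i _
    simp [Finsupp.sum]
  · intro i _ a a'
    rw [← Finsupp.sum_add]
    exact Finsupp.sum_congr fun j _ => by rw [add_mul, Finsupp.single_add]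

theorem skewMul_add (p q q' : ℕ →₀ S) :
    skewMul σ p (q + q') = skewMul σ p q + skewMul σ p q' := by
  rw [skewMul, skewMul, skewMul, ← Finsupp.sum_add]
  refine Finsupp.sum_congr fun i _ => ?_
  apply Finsupp.sum_add_index
  · intro j _; simp
  · intro j _ b b'
    rw [map_add, mul_add, Finsupp.single_add]

theorem skewMul_single_single (i j : ℕ) (a b : S) :
    skewMul σ (Finsupp.single i a) (Finsupp.single j b)
      = Finsupp.single (i + j) (a * (σ ^ i) b) := by
  ext t
  rw [single_skewMul_apply]
  by_cases hit : i ≤ t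
  · rw [if_pos hit, Finsupp.single_apply, Finsupp.single_apply]
    by_cases hj : j = t - i
    · rw [if_pos hj, if_pos (by omega)]
    · rw [if_neg hj, if_neg (by omega), map_zero, mul_zero]
  · rw [if_neg hit, Finsupp.single_apply, if_neg (by omega)]

theorem skewMul_assoc (p q r : ℕ →₀ S) :
    skewMul σ (skewMul σ p q) r = skewMul σ p (skewMul σ q r) := by
  induction p using Finsupp.induction with
  | zero => rw [zero_skewMul, zero_skewMul, zero_skewMul]
  | single_add i a p _ _ ih =>
    simp only [add_skewMul, ih]
    congr 1
    clear ih
    induction q using Finsupp.induction with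
    | zero => simp [skewMul_zero, zero_skewMul]
    | single_add j b q _ _ ihq =>
      simp only [skewMul_add, add_skewMul, ihq]
      congr 1
      clear ihq
      induction r using Finsupp.induction with
      | zero => simp [skewMul_zero, zero_skewMul]
      | single_add l c r _ _ ihr =>
        simp only [skewMul_add, ihr]
        congr 1
        rw [skewMul_single_single, skewMul_single_single, skewMul_single_single,
          skewMul_single_single]
        rw [add_assoc, mul_assoc]
        congr 2
        rw [map_mul, pow_add]
        rfl

end SkewAux

namespace SkewAux

variable {S : Type} [Ring S] (σ : RingAut S)

theorem one_skewMul (p : ℕ →₀ S) : skewMul σ (Finsupp.single 0 1) p = p := by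
  ext t
  rw [single_skewMul_apply, if_pos (Nat.zero_le t)]
  simp only [pow_zero, Nat.sub_zero, one_mul]
  rfl

theorem skewMul_one (p : ℕ →₀ S) : skewMul σ p (Finsupp.single 0 1) = p := by
  rw [skewMul]
  have : ∀ i ∈ p.support, ((Finsupp.single 0 1 : ℕ →₀ S).sum fun j b =>
      Finsupp.single (i + j) (p i * (σ ^ i) b)) = Finsupp.single i (p i) := by
    intro i _
    rw [Finsupp.sum_single_index (by simp)]
    simp
  rw [Finsupp.sum_congr this]
  exact Finsupp.sum_single p

theorem neg_skewMul (p q : ℕ →₀ S) : skewMul σ (-p) q = -skewMul σ p q := by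
  have h := add_skewMul σ p (-p) q
  rw [add_neg_cancel, zero_skewMul] at h
  exact eq_neg_of_add_eq_zero_right h.symm

theorem smul_single_zero (a : S) (p : ℕ →₀ S) :
    skewMul σ (Finsupp.single 0 a) p = a • p := by
  ext t
  rw [single_skewMul_apply, if_pos (Nat.zero_le t)]
  simp only [pow_zero, Nat.sub_zero, Finsupp.smul_apply, smul_eq_mul]
  rfl

theorem skewMul_bound {P Q : ℕ} {p q : ℕ →₀ S} (hp : ∀ j, P ≤ j → p j = 0)
    (hq : ∀ j, Q ≤ j → q j = 0) : ∀ t, P + Q ≤ t + 1 → skewMul σ p q t = 0 := by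
  intro t ht
  rw [skewMul_apply]
  refine Finset.sum_eq_zero fun i hi => ?_
  by_cases hit : i ≤ t
  · rw [if_pos hit]
    by_cases hiP : P ≤ i
    · rw [hp i hiP, zero_mul]
    · rw [hq (t - i) (by omega), map_zero, mul_zero]
  · rw [if_neg hit]

theorem skewMul_top {P Q : ℕ} {p q : ℕ →₀ S} (hp : ∀ j, P < j → p j = 0)
    (hq : ∀ j, Q < j → q j = 0) :
    skewMul σ p q (P + Q) = p P * (σ ^ P) (q Q) := by
  rw [skewMul_apply]
  by_cases hP : P ∈ p.support
  · rw [Finset.sum_eq_single P]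
    · rw [if_pos (Nat.le_add_right _ _), Nat.add_sub_cancel_left]
    · intro i hi hne
      by_cases hit : i ≤ P + Q
      · rw [if_pos hit]
        by_cases hiP : P < i
        · rw [hp i hiP, zero_mul]
        · rw [hq (P + Q - i) (by omega), map_zero, mul_zero]
      · rw [if_neg hit]
    · intro hPn; exact absurd hP hPn
  · rw [Finsupp.notMem_support_iff.mp hP, zero_mul]
    refine Finset.sum_eq_zero fun i hi => ?_
    by_cases hit : i ≤ P + Q
    · rw [if_pos hit]
      by_cases hiP : P < i
      · rw [hp i hiP, zero_mul]
      · rcases Nat.lt_or_ge i P with hlt | hge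
        · rw [hq (P + Q - i) (by omega), map_zero, mul_zero]
        · have : i = P := by omega
          subst this
          rw [Finsupp.notMem_support_iff.mp hP, zero_mul]
    · rw [if_neg hit]

end SkewAux

namespace SkewAux

variable {S : Type} [Ring S] (σ : RingAut S)

theorem skewMul_sub (p q q' : ℕ →₀ S) :
    skewMul σ p (q - q') = skewMul σ p q - skewMul σ p q' := by
  have h := skewMul_add σ p (q - q') q'
  rw [sub_add_cancel] at h
  rw [h]; abel

theorem sub_skewMul (p p' q : ℕ →₀ S) :
    skewMul σ (p - p') q = skewMul σ p q - skewMul σ p' q := by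
  have h := add_skewMul σ (p - p') p' q
  rw [sub_add_cancel] at h
  rw [h]; abel

/-- The maximal index of the support of a nonzero finsupp. -/
noncomputable def deg (p : ℕ →₀ S) (hp : p ≠ 0) : ℕ :=
  p.support.max' (Finsupp.support_nonempty_iff.mpr hp)

theorem deg_spec (p : ℕ →₀ S) (hp : p ≠ 0) :
    p (deg p hp) ≠ 0 ∧ ∀ j, deg p hp < j → p j = 0 := by
  unfold deg
  constructor
  · exact Finsupp.mem_support_iff.mp (p.support.max'_mem _)
  · intro j hj
    by_contra hne
    exact absurd (p.support.le_max' j (Finsupp.mem_support_iff.mpr hne)) (by omega)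

theorem skewMul_ne_zero {F : Type} [Field F] (Θ : RingAut F) {p q : ℕ →₀ F}
    (hp : p ≠ 0) (hq : q ≠ 0) : skewMul Θ p q ≠ 0 := by
  obtain ⟨hp1, hp2⟩ := deg_spec p hp
  obtain ⟨hq1, hq2⟩ := deg_spec q hq
  intro hzero
  have := skewMul_top Θ hp2 hq2
  rw [hzero] at this
  simp only [Finsupp.coe_zero, Pi.zero_apply] at this
  exact hq1 (by
    have h2 : (Θ ^ deg p hp) (q (deg q hq)) = 0 := by
      by_contra hne
      exact hp1 (by
        rcases mul_eq_zero.mp this.symm with h | h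
        · exact h
        · exact absurd h hne)
    have := congrArg (Θ ^ deg p hp).symm h2
    rwa [RingEquiv.symm_apply_apply, map_zero] at this)

theorem skewMul_left_cancel {F : Type} [Field F] (Θ : RingAut F) {p q q' : ℕ →₀ F}
    (hp : p ≠ 0) (h : skewMul Θ p q = skewMul Θ p q') : q = q' := by
  by_contra hne
  have : q - q' ≠ 0 := sub_ne_zero_of_ne hne
  have h2 := skewMul_ne_zero Θ hp this
  rw [skewMul_sub, h, sub_self] at h2
  exact h2 rfl

theorem skewMul_right_cancel {F : Type} [Field F] (Θ : RingAut F) {p p' q : ℕ →₀ F}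
    (hq : q ≠ 0) (h : skewMul Θ p q = skewMul Θ p' q) : p = p' := by
  by_contra hne
  have : p - p' ≠ 0 := sub_ne_zero_of_ne hne
  have h2 := skewMul_ne_zero Θ this hq
  rw [sub_skewMul, h, sub_self] at h2
  exact h2 rfl

theorem skewMul_single_apply (p : ℕ →₀ S) (j : ℕ) (b : S) (t : ℕ) :
    skewMul σ p (Finsupp.single j b) t =
      if j ≤ t then p (t - j) * (σ ^ (t - j)) b else 0 := by
  rw [skewMul_apply]
  by_cases hjt : j ≤ t
  · rw [if_pos hjt]
    have : ∀ i ∈ p.support, (if i ≤ t then p i * (σ ^ i) ((Finsupp.single j b) (t - i)) else 0)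
        = if i = t - j then p i * (σ ^ i) b else 0 := by
      intro i _
      by_cases hi : i = t - j
      · subst hi
        rw [if_pos (by omega), if_pos rfl, Finsupp.single_apply, if_pos (by omega)]
      · rw [if_neg hi]
        by_cases hit : i ≤ t
        · rw [if_pos hit, Finsupp.single_apply, if_neg (by omega), map_zero, mul_zero]
        · rw [if_neg hit]
    rw [Finset.sum_congr rfl this, Finset.sum_ite_eq' p.support (t - j)]
    by_cases hmem : t - j ∈ p.support
    · rw [if_pos hmem]
    · rw [if_neg hmem, Finsupp.notMem_support_iff.mp hmem, zero_mul]
  · rw [if_neg hjt]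
    refine Finset.sum_eq_zero fun i hi => ?_
    by_cases hit : i ≤ t
    · rw [if_pos hit, Finsupp.single_apply, if_neg (by omega), map_zero, mul_zero]
    · rw [if_neg hit]

end SkewAux

namespace SkewAux

variable {S : Type} [Ring S] (σ : RingAut S)

theorem toPoly_apply {n : ℕ} (c : Fin n → S) (i : Fin n) : toPoly c (i : ℕ) = c i := by
  rw [toPoly, Finsupp.finset_sum_apply]
  rw [Finset.sum_eq_single i]
  · rw [Finsupp.single_eq_same]
  · intro j _ hne
    rw [Finsupp.single_apply, if_neg (by simpa [Fin.val_eq_val] using hne)]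
  · intro hn; exact absurd (Finset.mem_univ i) hn

theorem toPoly_apply_ge {n : ℕ} (c : Fin n → S) (j : ℕ) (hj : n ≤ j) : toPoly c j = 0 := by
  rw [toPoly, Finsupp.finset_sum_apply]
  refine Finset.sum_eq_zero fun i _ => ?_
  rw [Finsupp.single_apply, if_neg (by omega)]

theorem toPoly_trunc {n : ℕ} (p : ℕ →₀ S) (hp : ∀ j, n ≤ j → p j = 0) :
    toPoly (fun i : Fin n => p (i : ℕ)) = p := by
  ext t
  by_cases ht : t < n
  · rw [show t = ((⟨t, ht⟩ : Fin n) : ℕ) from rfl, toPoly_apply]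
  · rw [toPoly_apply_ge _ _ (by omega), hp t (by omega)]

theorem toPoly_add {n : ℕ} (c c' : Fin n → S) : toPoly (c + c') = toPoly c + toPoly c' := by
  rw [toPoly, toPoly, toPoly, ← Finset.sum_add_distrib]
  exact Finset.sum_congr rfl fun i _ => by rw [Pi.add_apply, Finsupp.single_add]

theorem toPoly_smul {n : ℕ} (a : S) (c : Fin n → S) : toPoly (a • c) = a • toPoly c := by
  rw [toPoly, toPoly, Finset.smul_sum]
  exact Finset.sum_congr rfl fun i _ => by
    rw [Pi.smul_apply, smul_eq_mul, Finsupp.smul_single, smul_eq_mul]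

theorem toPoly_zero {n : ℕ} : toPoly (0 : Fin n → S) = 0 := by
  rw [toPoly]
  exact Finset.sum_eq_zero fun i _ => Finsupp.single_zero _

theorem skewRecip_apply (Θ : RingAut S) (k : ℕ) (h : ℕ →₀ S) (s : ℕ) :
    skewRecip Θ k h s = if s ≤ k then (Θ ^ s) (h (k - s)) else 0 := by
  rw [skewRecip, Finsupp.finset_sum_apply]
  by_cases hs : s ≤ k
  · rw [if_pos hs, Finset.sum_eq_single s]
    · rw [Finsupp.single_eq_same]
    · intro j _ hne
      rw [Finsupp.single_apply, if_neg hne]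
    · intro hn
      exact absurd (Finset.mem_range.mpr (by omega)) hn
  · rw [if_neg hs]
    refine Finset.sum_eq_zero fun j hj => ?_
    rw [Finsupp.single_apply, if_neg (by simp at hj; omega)]

variable {F : Type} [Field F] (Θ : RingAut F)

/-- centrality of x^n - lam -/
theorem skewMul_central {n : ℕ} {lam : F} (hTn : Θ ^ n = 1) (hlam : ∀ i, (Θ ^ i) lam = lam)
    (p : ℕ →₀ F) :
    skewMul Θ p (Finsupp.single n 1 - Finsupp.single 0 lam)
      = skewMul Θ (Finsupp.single n 1 - Finsupp.single 0 lam) p := by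
  rw [skewMul_sub, sub_skewMul]
  ext t
  rw [Finsupp.sub_apply, Finsupp.sub_apply, skewMul_single_apply, skewMul_single_apply,
    single_skewMul_apply, single_skewMul_apply]
  congr 1
  · by_cases hnt : n ≤ t
    · rw [if_pos hnt, if_pos hnt, map_one, mul_one, one_mul, hTn]
      rfl
    · rw [if_neg hnt, if_neg hnt]
  · rw [if_pos (Nat.zero_le t), if_pos (Nat.zero_le t), Nat.sub_zero, hlam t, pow_zero]
    show p t * lam = lam * ((1 : RingAut F) (p t))
    show p t * lam = lam * p t
    rw [mul_comm]

theorem fh_eq {n : ℕ} {lam : F} (hTn : Θ ^ n = 1) (hlam : ∀ i, (Θ ^ i) lam = lam)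
    {f h : ℕ →₀ F} (hh : h ≠ 0)
    (hdiv : skewMul Θ h f = Finsupp.single n 1 - Finsupp.single 0 lam) :
    skewMul Θ f h = Finsupp.single n 1 - Finsupp.single 0 lam := by
  apply skewMul_left_cancel Θ hh
  rw [← skewMul_assoc, hdiv, skewMul_central Θ hTn hlam]

end SkewAux

namespace SkewAux

variable {F : Type} [Field F] (Θ : RingAut F)

theorem skewMul_apply_zero (p q : ℕ →₀ F) : skewMul Θ p q 0 = p 0 * q 0 := by
  rw [skewMul_apply]
  by_cases h0 : 0 ∈ p.support
  · rw [Finset.sum_eq_single 0]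
    · rw [if_pos le_rfl, pow_zero]
      rfl
    · intro i _ hne
      rw [if_neg (by omega)]
    · intro hn; exact absurd h0 hn
  · rw [Finsupp.notMem_support_iff.mp h0, zero_mul]
    refine Finset.sum_eq_zero fun i hi => ?_
    by_cases hi0 : i = 0
    · subst hi0; exact absurd hi h0
    · rw [if_neg (by omega)]

theorem skewRecip_shift (k m : ℕ) (hm : m ≤ k) (h : ℕ →₀ F) (hh : ∀ j, m < j → h j = 0) :
    skewRecip Θ k h = skewMul Θ (Finsupp.single (k - m) 1) (skewRecip Θ m h) := by
  ext t
  rw [skewRecip_apply, single_skewMul_apply]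
  by_cases h1 : k - m ≤ t
  · rw [if_pos h1, skewRecip_apply, one_mul]
    by_cases h2 : t ≤ k
    · rw [if_pos h2, if_pos (by omega)]
      have hcomp : ∀ (a b : ℕ) (x : F), (Θ ^ a) ((Θ ^ b) x) = (Θ ^ (a + b)) x := by
        intro a b x
        rw [pow_add]
        rfl
      rw [hcomp, show k - m + (t - (k - m)) = t by omega]
      congr 2
      omega
    · rw [if_neg h2, if_neg (by omega), map_zero]
  · rw [if_neg h1, if_pos (by omega), hh (k - t) (by omega), map_zero]

/-- shift down by one, twisting by Θ⁻¹ -/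
noncomputable def shiftDown (q : ℕ →₀ F) : ℕ →₀ F :=
  Finsupp.onFinset (q.support.image fun i => i - 1)
    (fun j => Θ.symm (q (j + 1)))
    (by
      intro j hj
      have hj' : Θ.symm (q (j + 1)) ≠ 0 := hj
      simp only [Finset.mem_image, Finsupp.mem_support_iff]
      refine ⟨j + 1, ?_, by omega⟩
      intro hq
      rw [hq, map_zero] at hj'
      exact hj' rfl)

theorem shiftDown_apply (q : ℕ →₀ F) (j : ℕ) : shiftDown Θ q j = Θ.symm (q (j + 1)) := rfl

theorem eq_x_skewMul (q : ℕ →₀ F) (h0 : q 0 = 0) :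
    q = skewMul Θ (Finsupp.single 1 1) (shiftDown Θ q) := by
  ext t
  rw [single_skewMul_apply]
  by_cases ht : 1 ≤ t
  · rw [if_pos ht, one_mul, shiftDown_apply, pow_one]
    rw [show t - 1 + 1 = t by omega, RingEquiv.apply_symm_apply]
  · rw [if_neg ht, show t = 0 by omega, h0]

theorem x_pow_factor (e : ℕ) (q p f : ℕ →₀ F) (hf0 : f 0 ≠ 0)
    (heq : skewMul Θ q f = skewMul Θ (Finsupp.single e 1) p) :
    ∃ q', skewMul Θ q' f = p := by
  induction e generalizing q p with
  | zero =>
    exact ⟨q, by rw [heq, one_skewMul]⟩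
  | succ e ih =>
    have h0 : q 0 = 0 := by
      have h1 : skewMul Θ q f 0 = q 0 * f 0 := skewMul_apply_zero Θ q f
      have h2 : skewMul Θ (Finsupp.single (e + 1) 1) p 0 = 0 := by
        rw [single_skewMul_apply, if_neg (by omega)]
      rw [heq, h2] at h1
      rcases mul_eq_zero.mp h1.symm with h | h
      · exact h
      · exact absurd h hf0
    have hq := eq_x_skewMul Θ q h0
    have hsingle : (Finsupp.single (e + 1) (1 : F))
        = skewMul Θ (Finsupp.single 1 1) (Finsupp.single e 1) := by
      rw [skewMul_single_single, map_one, mul_one]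
      congr 1
      omega
    rw [hq, skewMul_assoc, hsingle, skewMul_assoc] at heq
    have hcancel := skewMul_left_cancel Θ
      (fun hc => by simpa using Finsupp.single_eq_zero.mp hc : (Finsupp.single 1 (1:F)) ≠ 0) heq
    exact ih _ _ hcancel

end SkewAux

namespace SkewAux

variable {F : Type} [Field F] (Θ : RingAut F)

theorem ortho_scalar {n d m : ℕ} {lam : F} (hn : m + d = n) {f h : ℕ →₀ F}
    (hfh : skewMul Θ f h = Finsupp.single n 1 - Finsupp.single 0 lam)
    (hfd : ∀ j, d < j → f j = 0) (hhm : ∀ j, m < j → h j = 0)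
    (i j : ℕ) (hi : i < d) (hj : j < m) (a b : F) :
    ∑ t ∈ Finset.range n,
      skewMul Θ (Finsupp.single i a) (skewRecip Θ m h) t *
        skewMul Θ (Finsupp.single j b) f t = 0 := by
  have hcomp : ∀ (x y : ℕ) (u : F), (Θ ^ x) ((Θ ^ y) u) = (Θ ^ (x + y)) u := by
    intro x y u; rw [pow_add]; rfl
  set c₀ := m - j + i with hc₀
  -- the guarded coefficient function of f ⋆ h at c₀
  set g : ℕ → F := fun v => if v ≤ c₀ then f v * (Θ ^ v) (h (c₀ - v)) else 0 with hg
  have hgzero : ∑ v ∈ Finset.range n, g v = 0 := by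
    have hK : skewMul Θ f h c₀ = 0 := by
      rw [hfh, Finsupp.sub_apply, Finsupp.single_apply, Finsupp.single_apply,
        if_neg (by omega), if_neg (by omega), sub_zero]
    rw [skewMul_apply] at hK
    rw [← hK]
    symm
    apply Finset.sum_subset
    · intro v hv
      rw [Finset.mem_range]
      have := Finsupp.mem_support_iff.mp hv
      by_contra hge
      exact this (hfd v (by omega))
    · intro v _ hv
      rw [Finsupp.notMem_support_iff.mp hv, zero_mul, ite_self]
  have hpt : ∀ t ∈ Finset.range n,
      skewMul Θ (Finsupp.single i a) (skewRecip Θ m h) t *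
        skewMul Θ (Finsupp.single j b) f t
      = if j ≤ t then a * b * (Θ ^ j) (g (t - j)) else 0 := by
    intro t _
    rw [single_skewMul_apply, single_skewMul_apply, skewRecip_apply]
    by_cases hjt : j ≤ t
    · rw [show (if j ≤ t then a * b * (Θ ^ j) (g (t - j)) else 0)
          = a * b * (Θ ^ j) (g (t - j)) from if_pos hjt, hg]
      simp only
      rw [if_pos hjt]
      by_cases htop : t ≤ m + i
      · rw [if_pos (show t - j ≤ c₀ by omega)]
        by_cases hit : i ≤ t
        · rw [if_pos hit, if_pos (show t - i ≤ m by omega), map_mul, hcomp, hcomp,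
            show i + (t - i) = t by omega, show j + (t - j) = t by omega,
            show c₀ - (t - j) = m - (t - i) by omega]
          ring
        · rw [if_neg hit, zero_mul, show c₀ - (t - j) = m + i - t by omega,
            hhm (m + i - t) (by omega)]
          simp
      · rw [if_neg (show ¬ t - j ≤ c₀ by omega)]
        by_cases hit : i ≤ t
        · rw [if_pos hit, if_neg (show ¬ t - i ≤ m by omega)]
          simp
        · rw [if_neg hit]
          simp
    · rw [if_neg hjt, mul_zero, if_neg hjt]
  rw [Finset.sum_congr rfl hpt]
  have hjn : j ≤ n := by omega
  rw [Finset.range_eq_Ico, ← Finset.sum_Ico_consecutive _ (Nat.zero_le j) hjn]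
  have h1 : ∑ t ∈ Finset.Ico 0 j, (if j ≤ t then a * b * (Θ ^ j) (g (t - j)) else 0) = 0 := by
    refine Finset.sum_eq_zero fun t ht => ?_
    rw [Finset.mem_Ico] at ht
    rw [if_neg (by omega)]
  have h2 : ∑ t ∈ Finset.Ico j n, (if j ≤ t then a * b * (Θ ^ j) (g (t - j)) else 0)
      = a * b * (Θ ^ j) (∑ v ∈ Finset.range (n - j), g v) := by
    rw [Finset.sum_Ico_eq_sum_range]
    rw [map_sum, Finset.mul_sum]
    refine Finset.sum_congr rfl fun v _ => ?_
    rw [if_pos (by omega), show j + v - j = v by omega]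
  rw [h1, h2, zero_add]
  have h3 : ∑ v ∈ Finset.range (n - j), g v = 0 := by
    rw [← hgzero]
    apply Finset.sum_subset
    · intro v hv
      rw [Finset.mem_range] at *
      omega
    · intro v _ hv
      rw [Finset.mem_range] at hv
      rw [hg]
      simp only
      rw [if_neg (by omega)]
  rw [h3, map_zero, mul_zero]

end SkewAux

namespace SkewAux

variable {F : Type} [Field F] (Θ : RingAut F)

theorem smul_skewMul (a : F) (p q : ℕ →₀ F) :
    skewMul Θ (a • p) q = a • skewMul Θ p q := by
  rw [← smul_single_zero, skewMul_assoc, smul_single_zero]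

/-- the linear map sending a coefficient vector `q` of length `M` to the codeword
of `(toPoly q) * g` of length `n`. -/
noncomputable def codeMap (g : ℕ →₀ F) (M n : ℕ) : (Fin M → F) →ₗ[F] (Fin n → F) where
  toFun q := fun t => skewMul Θ (toPoly q) g (t : ℕ)
  map_add' q q' := by
    funext t
    show skewMul Θ (toPoly (q + q')) g (t : ℕ)
      = skewMul Θ (toPoly q) g (t : ℕ) + skewMul Θ (toPoly q') g (t : ℕ)
    rw [toPoly_add, add_skewMul]
    exact Finsupp.add_apply _ _ _
  map_smul' a q := by
    funext t
    show skewMul Θ (toPoly (a • q)) g (t : ℕ) = a • (skewMul Θ (toPoly q) g (t : ℕ))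
    rw [toPoly_smul, smul_skewMul]
    exact Finsupp.smul_apply _ _ _

theorem codeMap_apply (g : ℕ →₀ F) (M n : ℕ) (q : Fin M → F) (t : Fin n) :
    codeMap Θ g M n q t = skewMul Θ (toPoly q) g (t : ℕ) := rfl

theorem toPoly_codeMap (g : ℕ →₀ F) {M n D : ℕ} (hg : ∀ j, D < j → g j = 0)
    (hMD : M + D ≤ n) (q : Fin M → F) :
    toPoly (codeMap Θ g M n q) = skewMul Θ (toPoly q) g := by
  apply toPoly_trunc
  intro j hj
  refine skewMul_bound Θ (P := M) (Q := D + 1) (fun s hs => toPoly_apply_ge q s hs)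
    (fun s hs => hg s (by omega)) j (by omega)

theorem mem_range_codeMap (g : ℕ →₀ F) {M n D : ℕ} (hg : ∀ j, D < j → g j = 0)
    (hgD : g D ≠ 0) (hMD : M + D = n) (c : Fin n → F) (Q : ℕ →₀ F)
    (hc : toPoly c = skewMul Θ Q g) : c ∈ Set.range (codeMap Θ g M n) := by
  have hQ : ∀ j, M ≤ j → Q j = 0 := by
    intro j hj
    by_contra hQj
    have hQne : Q ≠ 0 := fun h0 => hQj (by rw [h0]; rfl)
    obtain ⟨h1, h2⟩ := deg_spec Q hQne
    have hJ : M ≤ deg Q hQne := by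
      by_contra hlt
      exact hQj (h2 j (by omega))
    have htop := skewMul_top Θ h2 hg
    have hzero : toPoly c (deg Q hQne + D) = 0 := toPoly_apply_ge c _ (by omega)
    rw [hc, htop] at hzero
    rcases mul_eq_zero.mp hzero with hx | hx
    · exact h1 hx
    · exact hgD (by
        have := congrArg (Θ ^ deg Q hQne).symm hx
        rwa [RingEquiv.symm_apply_apply, map_zero] at this)
  refine ⟨fun t : Fin M => Q (t : ℕ), ?_⟩
  funext t
  rw [codeMap_apply, toPoly_trunc Q hQ, ← hc]
  exact toPoly_apply c t

theorem codeMap_injective (g : ℕ →₀ F) {M n D : ℕ} (hg : ∀ j, D < j → g j = 0)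
    (hgne : g ≠ 0) (hMD : M + D ≤ n) : Function.Injective (codeMap Θ g M n) := by
  rw [injective_iff_map_eq_zero]
  intro q hq
  have hzero : skewMul Θ (toPoly q) g = 0 := by
    ext t
    by_cases ht : t < n
    · have := congrFun hq ⟨t, ht⟩
      rw [codeMap_apply] at this
      exact this
    · exact skewMul_bound Θ (P := M) (Q := D + 1) (fun s hs => toPoly_apply_ge q s hs)
        (fun s hs => hg s (by omega)) t (by omega)
  have hqp : toPoly q = 0 := by
    by_contra hne
    exact skewMul_ne_zero Θ hne hgne hzero
  funext t
  rw [← toPoly_apply q t, hqp]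
  rfl

theorem finrank_range_codeMap (g : ℕ →₀ F) {M n D : ℕ} (hg : ∀ j, D < j → g j = 0)
    (hgne : g ≠ 0) (hMD : M + D ≤ n) :
    Module.finrank F (LinearMap.range (codeMap Θ g M n)) = M := by
  have h1 := LinearMap.finrank_range_add_finrank_ker (codeMap Θ g M n)
  rw [LinearMap.ker_eq_bot.mpr (codeMap_injective Θ g hg hgne hMD), finrank_bot,
    add_zero, Module.finrank_fin_fun] at h1
  exact h1

/-- the dot product bilinear form -/
noncomputable def dotForm (n : ℕ) : LinearMap.BilinForm F (Fin n → F) :=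
  LinearMap.mk₂ F (fun a b => ∑ t, a t * b t)
    (fun a a' b => by
      rw [← Finset.sum_add_distrib]
      exact Finset.sum_congr rfl fun t _ => by rw [Pi.add_apply, add_mul])
    (fun r a b => by
      rw [Finset.smul_sum]
      exact Finset.sum_congr rfl fun t _ => by
        rw [Pi.smul_apply, smul_eq_mul, smul_eq_mul, mul_assoc])
    (fun a b b' => by
      rw [← Finset.sum_add_distrib]
      exact Finset.sum_congr rfl fun t _ => by rw [Pi.add_apply, mul_add])
    (fun r a b => by
      rw [Finset.smul_sum]
      exact Finset.sum_congr rfl fun t _ => by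
        rw [Pi.smul_apply, smul_eq_mul, smul_eq_mul, mul_left_comm])

theorem dotForm_apply (n : ℕ) (a b : Fin n → F) : dotForm n a b = ∑ t, a t * b t := by
  rw [dotForm, LinearMap.mk₂_apply]

theorem dotForm_isRefl (n : ℕ) : (dotForm (F := F) n).IsRefl := by
  intro a b hab
  rw [dotForm_apply] at *
  rw [← hab]
  exact Finset.sum_congr rfl fun t _ => mul_comm _ _

theorem dotForm_nondegenerate (n : ℕ) : (dotForm (F := F) n).Nondegenerate := by
  refine (LinearMap.IsRefl.nondegenerate_iff_separatingLeft (B := dotForm (F := F) n)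
    (fun a b => dotForm_isRefl n a b)).mpr ?_
  intro a ha
  funext t
  have := ha (Pi.single t 1)
  rw [dotForm_apply, Finset.sum_eq_single t] at this
  · rwa [Pi.single_eq_same, mul_one] at this
  · intro s _ hst
    rw [Pi.single_eq_of_ne hst, mul_zero]
  · intro hn; exact absurd (Finset.mem_univ t) hn

end SkewAux

namespace SkewAux

variable {F : Type} [Field F] (Θ : RingAut F)

theorem skewMul_eq_sum_single_apply (p q : ℕ →₀ F) (t : ℕ) :
    skewMul Θ p q t = ∑ i ∈ p.support, skewMul Θ (Finsupp.single i (p i)) q t := by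
  rw [skewMul_apply]
  exact Finset.sum_congr rfl fun i _ => (single_skewMul_apply Θ i (p i) q t).symm

theorem pow_apply_ne_zero (i : ℕ) {x : F} (hx : x ≠ 0) : (Θ ^ i) x ≠ 0 := by
  intro h0
  have := congrArg (Θ ^ i).symm h0
  rw [RingEquiv.symm_apply_apply, map_zero] at this
  exact hx this

end SkewAux

open SkewAux in
theorem stmt15 (F : Type) [Field F] [Fintype F] (n : ℕ) [NeZero n]
    (Θ : RingAut F) (hord : orderOf Θ ∣ n)
    (lam : F) (hlam : lam = 1 ∨ lam = -1)
    (f h : ℕ →₀ F) (k : ℕ) (hk : ∀ j, k < j → h j = 0)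
    (hmon : IsMonicPoly f)
    (hdiv : skewMul Θ h f = Finsupp.single n 1 - Finsupp.single 0 lam)
    (A : Set (Fin n → F))
    (hA : ∀ c : Fin n → F, c ∈ A ↔ ∃ q, toPoly c = skewMul Θ q f) :
    dualSet A ⊆ A ↔
      ∃ q : ℕ →₀ F, skewMul Θ q (Finsupp.single n 1 - Finsupp.single 0 lam) =
        skewMul Θ (skewRecip Θ k h) h := by
  obtain ⟨d, hfd1, hfd2⟩ := hmon
  have hlamne : lam ≠ 0 := by rcases hlam with h1 | h1 <;> simp [h1]
  have hnz : n ≠ 0 := NeZero.ne n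
  have hconst : h 0 * f 0 = -lam := by
    have hc := skewMul_apply_zero Θ h f
    rw [hdiv, Finsupp.sub_apply, Finsupp.single_apply, Finsupp.single_apply,
      if_neg hnz, if_pos rfl, zero_sub] at hc
    exact hc.symm
  have hh0 : h 0 ≠ 0 := fun h0 => hlamne (by have := hconst; rw [h0, zero_mul] at this; simpa using this.symm)
  have hf0 : f 0 ≠ 0 := fun h0 => hlamne (by have := hconst; rw [h0, mul_zero] at this; simpa using this.symm)
  have hhne : h ≠ 0 := fun h0 => hh0 (by rw [h0]; rfl)
  obtain ⟨hM1, hM2⟩ := deg_spec h hhne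
  set m := deg h hhne with hmdef
  have hMd : m + d = n := by
    by_cases h0 : m + d = 0
    · exfalso
      have hb := skewMul_bound Θ (P := 1) (Q := 1)
        (fun j hj => hM2 j (by omega)) (fun j hj => hfd2 j (by omega)) n (by omega)
      rw [hdiv, Finsupp.sub_apply, Finsupp.single_apply, Finsupp.single_apply,
        if_pos rfl, if_neg (by omega)] at hb
      simp at hb
    · have htop := skewMul_top Θ hM2 hfd2
      rw [hdiv, hfd1, map_one, mul_one, Finsupp.sub_apply, Finsupp.single_apply,
        Finsupp.single_apply] at htop
      by_contra hne
      rw [if_neg (fun hh => hne hh.symm), if_neg (by omega), sub_zero] at htop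
      exact hM1 htop.symm
  have hmk : m ≤ k := by
    by_contra hgt
    exact hM1 (hk m (by omega))
  have hTn : Θ ^ n = 1 := orderOf_dvd_iff_pow_eq_one.mp hord
  have hlampow : ∀ i, (Θ ^ i) lam = lam := by
    intro i
    rcases hlam with h1 | h1 <;> subst h1 <;> simp
  have hfh := fh_eq Θ hTn hlampow hhne hdiv
  have hRHSiff : (∃ q : ℕ →₀ F, skewMul Θ q (Finsupp.single n 1 - Finsupp.single 0 lam) =
        skewMul Θ (skewRecip Θ k h) h) ↔ ∃ q, skewRecip Θ k h = skewMul Θ q f := by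
    constructor
    · rintro ⟨q, hq⟩
      rw [← hfh, ← skewMul_assoc] at hq
      exact ⟨q, (skewMul_right_cancel Θ hhne hq).symm⟩
    · rintro ⟨q, hq⟩
      exact ⟨q, by rw [hq, skewMul_assoc, hfh]⟩
  have hPkm : (∃ q, skewRecip Θ k h = skewMul Θ q f) ↔
      ∃ q, skewRecip Θ m h = skewMul Θ q f := by
    have hshift := skewRecip_shift Θ k m hmk h hM2
    constructor
    · rintro ⟨q, hq⟩
      rw [hshift] at hq
      obtain ⟨q', hq'⟩ := x_pow_factor Θ (k - m) q (skewRecip Θ m h) f hf0 hq.symm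
      exact ⟨q', hq'.symm⟩
    · rintro ⟨q, hq⟩
      exact ⟨skewMul Θ (Finsupp.single (k - m) 1) q, by rw [hshift, hq, skewMul_assoc]⟩
  by_cases hd0 : d = 0
  · subst hd0
    have hfone : f = Finsupp.single 0 1 := by
      ext j
      rcases Nat.eq_zero_or_pos j with rfl | hj
      · rw [hfd1, Finsupp.single_eq_same]
      · rw [hfd2 j hj, Finsupp.single_apply, if_neg (by omega)]
    constructor
    · intro _
      exact hRHSiff.mpr ⟨skewRecip Θ k h, by rw [hfone, skewMul_one]⟩
    · intro _ c _
      rw [hA c]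
      exact ⟨toPoly c, by rw [hfone, skewMul_one]⟩
  · -- main case : d ≥ 1
    set H := skewRecip Θ m h with hHdef
    have hHb : ∀ j, m < j → H j = 0 := fun j hj => by
      rw [hHdef, skewRecip_apply, if_neg (by omega)]
    have hHm : H m ≠ 0 := by
      rw [hHdef, skewRecip_apply, if_pos le_rfl, Nat.sub_self]
      exact pow_apply_ne_zero Θ m hh0
    have hHne : H ≠ 0 := fun h0 => hHm (by rw [h0]; rfl)
    have hfne : f ≠ 0 := fun h0 => hf0 (by rw [h0]; rfl)
    set Asub := LinearMap.range (codeMap Θ f m n) with hAsubdef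
    set Bsub := LinearMap.range (codeMap Θ H d n) with hBsubdef
    have hAset : ∀ c, c ∈ A ↔ c ∈ Asub := by
      intro c
      rw [hA c]
      constructor
      · rintro ⟨Q, hQ⟩
        obtain ⟨q, hq⟩ := mem_range_codeMap Θ f hfd2 (by rw [hfd1]; exact one_ne_zero)
          hMd c Q hQ
        exact ⟨q, hq⟩
      · rintro ⟨q, rfl⟩
        exact ⟨toPoly q, toPoly_codeMap Θ f hfd2 (le_of_eq hMd) q⟩
    have hBperp : Bsub ≤ (dotForm n).orthogonal Asub := by
      rintro c ⟨p, rfl⟩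
      rw [LinearMap.BilinForm.mem_orthogonal_iff]
      rintro a ⟨q, rfl⟩
      show dotForm n (codeMap Θ f m n q) (codeMap Θ H d n p) = 0
      have hstep : dotForm n (codeMap Θ f m n q) (codeMap Θ H d n p)
          = ∑ t ∈ Finset.range n, skewMul Θ (toPoly q) f t * skewMul Θ (toPoly p) H t := by
        rw [dotForm_apply]
        exact Fin.sum_univ_eq_sum_range
          (fun t => skewMul Θ (toPoly q) f t * skewMul Θ (toPoly p) H t) n
      rw [hstep]
      have hexp : ∀ t ∈ Finset.range n, skewMul Θ (toPoly q) f t * skewMul Θ (toPoly p) H t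
          = ∑ j ∈ (toPoly q).support, ∑ i ∈ (toPoly p).support,
              skewMul Θ (Finsupp.single j (toPoly q j)) f t *
                skewMul Θ (Finsupp.single i (toPoly p i)) H t := by
        intro t _
        rw [skewMul_eq_sum_single_apply Θ (toPoly q) f t,
          skewMul_eq_sum_single_apply Θ (toPoly p) H t, Finset.sum_mul_sum]
      rw [Finset.sum_congr rfl hexp, Finset.sum_comm]
      refine Finset.sum_eq_zero fun j hj => ?_
      rw [Finset.sum_comm]
      refine Finset.sum_eq_zero fun i hi => ?_
      have hjm : j < m := by
        by_contra hge
        exact Finsupp.mem_support_iff.mp hj (toPoly_apply_ge q j (by omega))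
      have hid : i < d := by
        by_contra hge
        exact Finsupp.mem_support_iff.mp hi (toPoly_apply_ge p i (by omega))
      have hortho := ortho_scalar Θ hMd hfh hfd2 hM2 i j hid hjm (toPoly p i) (toPoly q j)
      rw [← hortho]
      exact Finset.sum_congr rfl fun t _ => mul_comm _ _
    have hArank : Module.finrank F Asub = m :=
      finrank_range_codeMap Θ f hfd2 hfne (le_of_eq hMd)
    have hBrank : Module.finrank F Bsub = d :=
      finrank_range_codeMap Θ H hHb hHne (by omega)
    have horthrank : Module.finrank F ((dotForm n).orthogonal Asub) = d := by
      rw [LinearMap.BilinForm.finrank_orthogonal (dotForm_nondegenerate n)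
        Asub, hArank, Module.finrank_fin_fun]
      omega
    have hBeq : Bsub = (dotForm n).orthogonal Asub :=
      Submodule.eq_of_le_of_finrank_le hBperp (by rw [horthrank, hBrank])
    have hdual : ∀ c, c ∈ dualSet A ↔ c ∈ Bsub := by
      intro c
      rw [hBeq]
      constructor
      · intro hc
        rw [LinearMap.BilinForm.mem_orthogonal_iff]
        intro a ha
        show dotForm n a c = 0
        rw [dotForm_apply, ← hc a ((hAset a).mpr ha)]
        exact Finset.sum_congr rfl fun t _ => mul_comm _ _
      · intro hc b hb
        have h2 : dotForm n b c = 0 :=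
          LinearMap.BilinForm.mem_orthogonal_iff.mp hc b ((hAset b).mp hb)
        rw [dotForm_apply] at h2
        rw [← h2]
        exact Finset.sum_congr rfl fun t _ => mul_comm _ _
    constructor
    · intro hsub
      refine hRHSiff.mpr (hPkm.mpr ?_)
      have hHbn : ∀ j, n ≤ j → H j = 0 := fun j hj => hHb j (by omega)
      have hwB : (fun t : Fin n => H (t : ℕ)) ∈ Bsub := by
        have : toPoly (fun t : Fin n => H (t : ℕ)) = skewMul Θ (Finsupp.single 0 1) H := by
          rw [toPoly_trunc H hHbn, one_skewMul]
        obtain ⟨p, hp⟩ := mem_range_codeMap Θ H (M := d) hHb hHm (show d + m = n by omega) _ (Finsupp.single 0 1) this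
        exact ⟨p, hp⟩
      have hwA := hsub ((hdual _).mpr hwB)
      obtain ⟨q, hq⟩ := (hA _).mp hwA
      rw [toPoly_trunc H hHbn] at hq
      exact ⟨q, hq⟩
    · intro hRHS c hc
      obtain ⟨q, hq⟩ := hPkm.mp (hRHSiff.mp hRHS)
      obtain ⟨p, rfl⟩ := (hdual c).mp hc
      rw [hA]
      refine ⟨skewMul Θ (toPoly p) q, ?_⟩
      rw [toPoly_codeMap Θ H hHb (by omega) p, hq, ← skewMul_assoc]
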